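/- Let A be a commutative algebra of transcendence degree 1 over an algebraically closed field k of characteristic zero, with a locally nilpotent derivation δ making A δ-simple. Suppose x, y ∈ A are transcendental over k with δ(x) = 1 and δ(y) = 0. Then x and y cannot both exist: any algebraic dependence relation of y over k[x] of minimal x-degree yields, by applying δ, a relation of smaller x-degree, forcing y to be algebraic over k, a contradiction. -/
import Mathlib

/-- in a δ-simple commutative algebra of transcendence degree 1
(any two elements are algebraically dependent) with δ locally nilpotent, there
cannot exist transcendental elements `x`, `y` with `δ x = 1` and `δ y = 0`. -/
theorem stmt14 (k : Type*) [Field k] [IsAlgClosed k] [CharZero k]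
    (A : Type*) [CommRing A] [Nontrivial A] [Algebra k A]
    (δ : A →ₗ[k] A) (hleib : ∀ a b, δ (a * b) = δ a * b + a * δ b)
    (hln : ∀ a : A, ∃ n : ℕ, (⇑δ)^[n] a = 0)
    (hsimple : ∀ I : Ideal A, (∀ x ∈ I, δ x ∈ I) → I = ⊥ ∨ I = ⊤)
    (htd : ∀ a b : A, ∃ p : MvPolynomial (Fin 2) k, p ≠ 0 ∧
      MvPolynomial.aeval ![a, b] p = 0)
    (x y : A) (hxt : ¬ IsAlgebraic k x) (hyt : ¬ IsAlgebraic k y)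
    (hx : δ x = 1) (hy : δ y = 0) :
    False := by
  -- basic facts about δ
  have h1 : δ 1 = 0 := by
    have := hleib 1 1; simpa using this
  have halg : ∀ c : k, δ (algebraMap k A c) = 0 := by
    intro c
    rw [Algebra.algebraMap_eq_smul_one, map_smul, h1, smul_zero]
  have hpow : ∀ n : ℕ, δ (x ^ (n + 1)) = (n + 1 : A) * x ^ n := by
    intro n
    induction n with
    | zero => simpa using hx
    | succ m ih =>
        have : x ^ (m + 2) = x * x ^ (m + 1) := by ring
        rw [this, hleib, hx, ih]
        push_cast
        ring
  -- δ kills polynomials in y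
  have L1 : ∀ r : Polynomial k, δ (Polynomial.aeval y r) = 0 := by
    intro r
    induction r using Polynomial.induction_on' with
    | add p q hp hq => simp [map_add, hp, hq]
    | monomial n a =>
        rw [Polynomial.aeval_monomial]
        induction n with
        | zero => simpa using halg a
        | succ m ih =>
            rw [pow_succ, ← mul_assoc, hleib, ih, hy, mul_zero, zero_mul, add_zero]
  -- the evaluation map
  set Φ : Polynomial (Polynomial k) →ₐ[k] A :=
    Polynomial.aevalTower (Polynomial.aeval y) x with hΦ
  have hΦC : ∀ r : Polynomial k, Φ (Polynomial.C r) = Polynomial.aeval y r := fun r =>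
    Polynomial.aevalTower_C _ _ _
  have hΦX : Φ Polynomial.X = x := Polynomial.aevalTower_X _ _
  -- chain rule
  have L2 : ∀ q : Polynomial (Polynomial k), δ (Φ q) = Φ (Polynomial.derivative q) := by
    intro q
    induction q using Polynomial.induction_on' with
    | add p q hp hq => simp [map_add, hp, hq]
    | monomial n a =>
        rw [← Polynomial.C_mul_X_pow_eq_monomial, Polynomial.derivative_C_mul_X_pow]
        cases n with
        | zero =>
            simp only [pow_zero, mul_one, Nat.cast_zero, mul_zero, map_zero, map_mul, hΦC]
            simpa using L1 a
        | succ m =>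
            simp only [map_mul, map_pow, hΦC, hΦX, Nat.add_sub_cancel]
            rw [hleib, L1, zero_mul, zero_add, hpow]
            simp only [map_mul, map_natCast]
            push_cast
            ring
  -- the two-variable iso
  set E : MvPolynomial (Fin 2) k ≃ₐ[k] Polynomial (Polynomial k) :=
    (MvPolynomial.finSuccEquiv k 1).trans
      (Polynomial.mapAlgEquiv ((MvPolynomial.finSuccEquiv k 0).trans
        (Polynomial.mapAlgEquiv (MvPolynomial.isEmptyAlgEquiv k (Fin 0))))) with hE
  have hcomp : ∀ p : MvPolynomial (Fin 2) k,
      Φ (E p) = MvPolynomial.aeval ![x, y] p := by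
    intro p
    have : (Φ.comp E.toAlgHom : MvPolynomial (Fin 2) k →ₐ[k] A)
        = MvPolynomial.aeval ![x, y] := by
      apply MvPolynomial.algHom_ext
      intro i
      have e0 : E (MvPolynomial.X 0) = Polynomial.X := by
        rw [hE]
        simp only [AlgEquiv.trans_apply, MvPolynomial.finSuccEquiv_X_zero,
          Polynomial.coe_mapAlgEquiv, Polynomial.map_X]
      have e1 : E (MvPolynomial.X 1) = Polynomial.C Polynomial.X := by
        have h01 : (1 : Fin 2) = (0 : Fin 1).succ := rfl
        rw [hE]
        simp only [AlgEquiv.trans_apply, h01, MvPolynomial.finSuccEquiv_X_succ,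
          Polynomial.coe_mapAlgEquiv, Polynomial.map_C]
        congr 1
        simp [MvPolynomial.finSuccEquiv_X_zero]
      fin_cases i
      · show Φ (E (MvPolynomial.X 0)) = _
        rw [e0, hΦX]; simp
      · show Φ (E (MvPolynomial.X 1)) = _
        rw [e1, hΦC]; simp
    calc Φ (E p) = (Φ.comp E.toAlgHom) p := rfl
    _ = MvPolynomial.aeval ![x, y] p := by rw [this]
  -- main induction
  have key : ∀ n : ℕ, ∀ q : Polynomial (Polynomial k),
      q.natDegree ≤ n → q ≠ 0 → Φ q = 0 → False := by
    intro n
    induction n with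
    | zero =>
        intro q hd hq0 hqe
        have hd0 : q.natDegree = 0 := Nat.le_zero.mp hd
        obtain ⟨r, rfl⟩ := Polynomial.natDegree_eq_zero.mp hd0
        exact hyt ⟨r, fun h => hq0 (by simp [h]), by rw [← hΦC r]; exact hqe⟩
    | succ n ih =>
        intro q hd hq0 hqe
        by_cases h0 : q.natDegree = 0
        · obtain ⟨r, rfl⟩ := Polynomial.natDegree_eq_zero.mp h0
          exact hyt ⟨r, fun h => hq0 (by simp [h]), by rw [← hΦC r]; exact hqe⟩
        · have hder0 : Polynomial.derivative q ≠ 0 := fun h =>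
            h0 (Polynomial.natDegree_eq_zero_of_derivative_eq_zero h)
          have hdlt : (Polynomial.derivative q).natDegree < q.natDegree :=
            Polynomial.natDegree_derivative_lt h0
          have : Φ (Polynomial.derivative q) = 0 := by
            rw [← L2, hqe, map_zero]
          exact ih (Polynomial.derivative q) (by omega) hder0 this
  obtain ⟨p, hp0, hpe⟩ := htd x y
  refine key (E p).natDegree (E p) le_rfl ?_ ?_
  · intro h
    exact hp0 (E.injective (by rw [h, map_zero]))
  · rw [hcomp]; exact hpe
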